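/- arXiv:2009.10280 — 5 statements merged into one kernel-verified Lean document; each statement's English description precedes it below -/
import Mathlib

section
/- Let C > 0 be a constant such that ‖w‖ ≤ C‖T w‖ for all w ∈ V. Then there exists a bounded linear operator G : H → H with operator norm ‖G‖ ≤ C such that for every v ∈ H the vector G v belongs to the topological closure of T(V) and ⟨G v, T w⟩ = ⟨v, w⟩ for all w ∈ V. -/
/-- Abstract solution operator (construction of `H_φ` in Theorem 2.3): under the
Carleman estimate `‖w‖ ≤ C‖T w‖` on `V`, there is a bounded operator `G` of norm
`≤ C` with `G v` in the closure of `T(V)` and `⟪G v, T w⟫ = ⟪v, w⟫` for all `w ∈ V`. -/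
theorem stmt_1 {H : Type*} [NormedAddCommGroup H] [InnerProductSpace ℂ H] [CompleteSpace H]
    (V : Submodule ℂ H) (T : V →ₗ[ℂ] H) (C : ℝ) (hC : 0 < C)
    (hCar : ∀ w : V, ‖(w : H)‖ ≤ C * ‖T w‖) :
    ∃ G : H →L[ℂ] H, ‖G‖ ≤ C ∧
      ∀ v : H, G v ∈ closure (Set.range fun w : V => T w) ∧
        ∀ w : V, (inner ℂ (G v) (T w) : ℂ) = inner ℂ v (w : H) := by
  classical
  have hinj : Function.Injective T := by
    intro a b hab
    have h1 : ‖((a - b : V) : H)‖ ≤ C * ‖T (a - b)‖ := hCar _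
    rw [map_sub, hab, sub_self, norm_zero, mul_zero] at h1
    have : ((a - b : V) : H) = 0 := norm_le_zero_iff.mp h1
    have : (a - b : V) = 0 := Subtype.ext this
    exact sub_eq_zero.mp this
  set K : Submodule ℂ H := LinearMap.range T with hK
  set S : Submodule ℂ H := K.topologicalClosure with hS
  haveI : CompleteSpace S := (Submodule.isClosed_topologicalClosure K).completeSpace_coe
  have hKS : K ≤ S := K.le_topologicalClosure
  have hSoo : Kᗮᗮ = S := Submodule.orthogonal_orthogonal_eq_closure K
  -- existence
  have hex : ∀ v : H, ∃ y : H, y ∈ S ∧ ‖y‖ ≤ C * ‖v‖ ∧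
      ∀ w : V, (inner ℂ y (T w) : ℂ) = inner ℂ v (w : H) := by
    intro v
    let e : V ≃ₗ[ℂ] K := LinearEquiv.ofInjective T hinj
    let ℓ₀ : K →ₗ[ℂ] ℂ := (innerSL ℂ v).toLinearMap ∘ₗ V.subtype ∘ₗ e.symm.toLinearMap
    have hℓ₀ : ∀ x : K, ℓ₀ x = inner ℂ v ((e.symm x : V) : H) := fun x => rfl
    have hb : ∀ x : K, ‖ℓ₀ x‖ ≤ (C * ‖v‖) * ‖x‖ := by
      intro x
      have hx : (x : H) = T (e.symm x) := by
        conv_lhs => rw [← e.apply_symm_apply x]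
        exact (LinearEquiv.ofInjective_apply T (h := hinj) _)
      rw [hℓ₀]
      calc ‖(inner ℂ v ((e.symm x : V) : H) : ℂ)‖ ≤ ‖v‖ * ‖((e.symm x : V) : H)‖ :=
            norm_inner_le_norm _ _
        _ ≤ ‖v‖ * (C * ‖T (e.symm x)‖) :=
            mul_le_mul_of_nonneg_left (hCar _) (norm_nonneg v)
        _ = (C * ‖v‖) * ‖x‖ := by rw [← hx, Submodule.coe_norm]; ring
    let ℓ : K →L[ℂ] ℂ := ℓ₀.mkContinuous (C * ‖v‖) hb
    have hℓnorm : ‖ℓ‖ ≤ C * ‖v‖ :=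
      ℓ₀.mkContinuous_norm_le (by positivity) hb
    obtain ⟨g, hg, hgnorm⟩ := exists_extension_norm_eq K ℓ
    set y₀ : H := (InnerProductSpace.toDual ℂ H).symm g with hy₀def
    have hy₀ : ∀ x : H, (inner ℂ y₀ x : ℂ) = g x := fun x =>
      InnerProductSpace.toDual_symm_apply
    have hy₀norm : ‖y₀‖ ≤ C * ‖v‖ := by
      have : ‖y₀‖ = ‖g‖ := (InnerProductSpace.toDual ℂ H).symm.norm_map g
      rw [this, hgnorm]; exact hℓnorm
    refine ⟨(S.orthogonalProjection y₀ : H), Submodule.coe_mem _, ?_, ?_⟩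
    · calc ‖(S.orthogonalProjection y₀ : H)‖ ≤ ‖S.orthogonalProjection‖ * ‖y₀‖ :=
            (S.orthogonalProjection).le_opNorm y₀
        _ ≤ 1 * ‖y₀‖ := mul_le_mul_of_nonneg_right (S.orthogonalProjection_norm_le) (norm_nonneg _)
        _ ≤ C * ‖v‖ := by rw [one_mul]; exact hy₀norm
    · intro w
      have hTw : T w ∈ S := hKS (LinearMap.mem_range_self T w)
      have horth : (inner ℂ (y₀ - (S.orthogonalProjection y₀ : H)) (T w) : ℂ) = 0 :=
        K.topologicalClosure.inner_left_of_mem_orthogonal hTw (S.sub_starProjection_mem_orthogonal y₀)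
      have h2 : (inner ℂ (S.orthogonalProjection y₀ : H) (T w) : ℂ) = inner ℂ y₀ (T w) := by
        have := inner_sub_left (𝕜 := ℂ) y₀ (S.orthogonalProjection y₀ : H) (T w)
        rw [horth] at this
        linear_combination this
      rw [h2, hy₀ (T w)]
      have hTwK : T w ∈ K := LinearMap.mem_range_self T w
      have h3 : g (T w) = ℓ (⟨T w, hTwK⟩ : K) := by
        have := hg (⟨T w, hTwK⟩ : K)
        simpa using this
      rw [h3]
      have h4 : ℓ (⟨T w, hTwK⟩ : K) = ℓ₀ (⟨T w, hTwK⟩ : K) := rfl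
      have h5 : e.symm (⟨T w, hTwK⟩ : K) = w := by
        apply e.injective
        rw [e.apply_symm_apply]
        exact Subtype.ext ((LinearEquiv.ofInjective_apply T (h := hinj) w)).symm
      rw [h4, hℓ₀, h5]
  -- uniqueness
  have huniq : ∀ y₁ y₂ : H, y₁ ∈ S → y₂ ∈ S →
      (∀ w : V, (inner ℂ y₁ (T w) : ℂ) = inner ℂ y₂ (T w)) → y₁ = y₂ := by
    intro y₁ y₂ h₁ h₂ hw
    have hd : y₁ - y₂ ∈ Kᗮ := by
      rw [Submodule.mem_orthogonal']
      rintro u ⟨w, rfl⟩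
      have := hw w
      rw [← sub_eq_zero, ← inner_sub_left] at this
      exact this
    have hdS : y₁ - y₂ ∈ Kᗮᗮ := hSoo ▸ (S.sub_mem h₁ h₂)
    have : (inner ℂ (y₁ - y₂) (y₁ - y₂) : ℂ) = 0 :=
      Kᗮ.inner_right_of_mem_orthogonal hd hdS
    rw [inner_self_eq_zero] at this
    exact sub_eq_zero.mp this
  -- build G
  let Gfun : H → H := fun v => (hex v).choose
  have hmem : ∀ v, Gfun v ∈ S := fun v => (hex v).choose_spec.1
  have hnorm' : ∀ v, ‖Gfun v‖ ≤ C * ‖v‖ := fun v => (hex v).choose_spec.2.1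
  have hid : ∀ v (w : V), (inner ℂ (Gfun v) (T w) : ℂ) = inner ℂ v (w : H) :=
    fun v => (hex v).choose_spec.2.2
  have hadd : ∀ v₁ v₂, Gfun (v₁ + v₂) = Gfun v₁ + Gfun v₂ := by
    intro v₁ v₂
    refine huniq _ _ (hmem _) (S.add_mem (hmem _) (hmem _)) fun w => ?_
    rw [hid, inner_add_left (𝕜 := ℂ), inner_add_left (𝕜 := ℂ), hid, hid]
  have hsmul : ∀ (c : ℂ) v, Gfun (c • v) = c • Gfun v := by
    intro c v
    refine huniq _ _ (hmem _) (S.smul_mem c (hmem _)) fun w => ?_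
    rw [hid, inner_smul_left (𝕜 := ℂ), inner_smul_left (𝕜 := ℂ), hid]
  let Glin : H →ₗ[ℂ] H :=
    { toFun := Gfun, map_add' := hadd, map_smul' := hsmul }
  refine ⟨Glin.mkContinuous C hnorm', Glin.mkContinuous_norm_le hC.le hnorm', fun v => ⟨?_, hid v⟩⟩
  have hset : closure (Set.range fun w : V => T w) = (S : Set H) := by
    rw [hS, Submodule.topologicalClosure_coe, hK]
    congr 1
  rw [hset]
  exact hmem v
end

section
/- The adjoint of the bounded operator H_A ∘ (I − π_B) equals H_B ∘ (I − π_A); that is, (H_A (I − π_B))† = H_B (I − π_A), where † denotes the Hilbert-space adjoint and I is the identity operator on H. -/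
set_option synthInstance.maxHeartbeats 400000

/-- Equation (2.4) of the paper: `(H_A (I − π_B))* = H_B (I − π_A)`, where `π_A`, `π_B`
are the orthogonal projections onto `(B(V))ᗮ` and `(A(V))ᗮ` respectively. -/
theorem stmt_2 {H : Type*} [NormedAddCommGroup H] [InnerProductSpace ℂ H] [CompleteSpace H]
    (V : Submodule ℂ H) (A B : V →ₗ[ℂ] H)
    (hAB : ∀ f g : V, (inner ℂ (A f) (g : H) : ℂ) = inner ℂ (f : H) (B g))
    (HA HB : H →L[ℂ] H)
    (hHAran : ∀ v : H, HA v ∈ closure (Set.range fun w : V => B w))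
    (hHBran : ∀ v : H, HB v ∈ closure (Set.range fun w : V => A w))
    (hHA : ∀ v : H, ∀ w : V, (inner ℂ (HA v) (B w) : ℂ) = inner ℂ v (w : H))
    (hHB : ∀ v : H, ∀ w : V, (inner ℂ (HB v) (A w) : ℂ) = inner ℂ v (w : H))
    (πA πB : H →L[ℂ] H)
    (hπA : πA = (LinearMap.range B)ᗮ.subtypeL ∘L Submodule.orthogonalProjection (LinearMap.range B)ᗮ)
    (hπB : πB = (LinearMap.range A)ᗮ.subtypeL ∘L Submodule.orthogonalProjection (LinearMap.range A)ᗮ) :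
    ContinuousLinearMap.adjoint (HA ∘L (1 - πB)) = HB ∘L (1 - πA) := by
  set KA := LinearMap.range A with hKA
  set KB := LinearMap.range B with hKB
  have hsetA : (Set.range fun w : V => A w) = (KA : Set H) := by
    ext x; simp [hKA, LinearMap.mem_range, eq_comm]
  have hsetB : (Set.range fun w : V => B w) = (KB : Set H) := by
    ext x; simp [hKB, LinearMap.mem_range, eq_comm]
  have hclA : closure (KA : Set H) = ((KAᗮᗮ : Submodule ℂ H) : Set H) := by
    rw [KA.orthogonal_orthogonal_eq_closure, Submodule.topologicalClosure_coe]
  have hclB : closure (KB : Set H) = ((KBᗮᗮ : Submodule ℂ H) : Set H) := by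
    rw [KB.orthogonal_orthogonal_eq_closure, Submodule.topologicalClosure_coe]
  -- base case: on range B × range A
  have base : ∀ f g : V, (inner ℂ (HB (B f)) (A g) : ℂ) = inner ℂ (B f : H) (HA (A g)) := by
    intro f g
    have h1 : (inner ℂ (HB (B f)) (A g) : ℂ) = inner ℂ (B f : H) (g : H) := hHB _ _
    have h2 : (inner ℂ (B f : H) (HA (A g)) : ℂ)
        = starRingEnd ℂ (inner ℂ (HA (A g)) (B f : H)) := (inner_conj_symm _ _).symm
    rw [h1, h2, hHA (A g) f, inner_conj_symm]
    -- goal: inner ℂ (B f) g = inner f (A g)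
    have := hAB g f
    calc (inner ℂ (B f : H) (g : H) : ℂ)
        = starRingEnd ℂ (inner ℂ (g : H) (B f : H)) := (inner_conj_symm _ _).symm
      _ = starRingEnd ℂ (inner ℂ (A g) (f : H) : ℂ) := by rw [← this]
      _ = inner ℂ (f : H) (A g) := inner_conj_symm _ _
  -- extend over v in closure of range A
  have step2 : ∀ f : V, ∀ v ∈ closure (KA : Set H),
      (inner ℂ (HB (B f)) v : ℂ) = inner ℂ (B f : H) (HA v) := by
    intro f v hv
    have hcl : IsClosed {v : H | (inner ℂ (HB (B f)) v : ℂ) = inner ℂ (B f : H) (HA v)} :=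
      isClosed_eq (continuous_const.inner continuous_id)
        (continuous_const.inner HA.continuous)
    have hsub : (KA : Set H) ⊆ {v : H | (inner ℂ (HB (B f)) v : ℂ) = inner ℂ (B f : H) (HA v)} := by
      rintro _ ⟨g, rfl⟩
      exact base f g
    exact closure_minimal hsub hcl hv
  -- extend over u in closure of range B
  have key : ∀ u ∈ closure (KB : Set H), ∀ v ∈ closure (KA : Set H),
      (inner ℂ (HB u) v : ℂ) = inner ℂ u (HA v) := by
    intro u hu v hv
    have hcl : IsClosed {u : H | (inner ℂ (HB u) v : ℂ) = inner ℂ u (HA v)} :=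
      isClosed_eq (HB.continuous.inner continuous_const)
        (continuous_id.inner continuous_const)
    have hsub : (KB : Set H) ⊆ {u : H | (inner ℂ (HB u) v : ℂ) = inner ℂ u (HA v)} := by
      rintro _ ⟨f, rfl⟩
      exact step2 f v hv
    exact closure_minimal hsub hcl hu
  refine ((ContinuousLinearMap.eq_adjoint_iff (HB ∘L (1 - πA)) (HA ∘L (1 - πB))).mpr ?_).symm
  intro x y
  simp only [ContinuousLinearMap.comp_apply, ContinuousLinearMap.sub_apply,
    ContinuousLinearMap.one_apply]
  -- memberships
  have hπAx : πA x ∈ KBᗮ := by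
    rw [hπA]; exact ((Submodule.orthogonalProjection KBᗮ x) : KBᗮ).2
  have hπBy : πB y ∈ KAᗮ := by
    rw [hπB]; exact ((Submodule.orthogonalProjection KAᗮ y) : KAᗮ).2
  have hu : x - πA x ∈ closure (KB : Set H) := by
    rw [hclB]
    rw [hπA]
    exact Submodule.sub_starProjection_mem_orthogonal (K := KBᗮ) x
  have hv : y - πB y ∈ closure (KA : Set H) := by
    rw [hclA]
    rw [hπB]
    exact Submodule.sub_starProjection_mem_orthogonal (K := KAᗮ) y
  have hHBu : HB (x - πA x) ∈ KAᗮᗮ := by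
    have := hHBran (x - πA x); rw [hsetA, hclA] at this; exact this
  have hHAv : HA (y - πB y) ∈ KBᗮᗮ := by
    have := hHAran (y - πB y); rw [hsetB, hclB] at this; exact this
  have horth1 : (inner ℂ (HB (x - πA x)) (πB y) : ℂ) = 0 := by
    have h0 : (inner ℂ (πB y) (HB (x - πA x)) : ℂ) = 0 :=
      (Submodule.mem_orthogonal (KAᗮ) _).mp hHBu (πB y) hπBy
    rw [← inner_conj_symm, h0, map_zero]
  have horth2 : (inner ℂ (πA x) (HA (y - πB y)) : ℂ) = 0 :=
    (Submodule.mem_orthogonal (KBᗮ) _).mp hHAv (πA x) hπAx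
  calc (inner ℂ (HB (x - πA x)) y : ℂ)
      = inner ℂ (HB (x - πA x)) (y - πB y) + inner ℂ (HB (x - πA x)) (πB y) := by
        rw [← inner_add_right, sub_add_cancel]
      _ = inner ℂ (x - πA x) (HA (y - πB y)) := by
        rw [horth1, add_zero]; exact key _ hu _ hv
      _ = inner ℂ x (HA (y - πB y)) := by
        rw [inner_sub_left, horth2, sub_zero]
end

section
/- Define G_A = H_A + π_A ∘ H_B†, where H_B† is the Hilbert-space adjoint of H_B. Then ⟨G_A v, B w⟩ = ⟨v, w⟩ for all v ∈ H and all w ∈ V, and the operator norm satisfies ‖G_A‖ ≤ ‖H_A‖ + ‖H_B‖. -/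
set_option synthInstance.maxHeartbeats 400000

/-- Items (i) and (ii) of Theorem 2.3: the Green operator `G_A = H_A + π_A H_B*`
satisfies `⟪G_A v, B w⟫ = ⟪v, w⟫` for all `v ∈ H`, `w ∈ V`, and `‖G_A‖ ≤ ‖H_A‖ + ‖H_B‖`. -/
theorem stmt_3 {H : Type*} [NormedAddCommGroup H] [InnerProductSpace ℂ H] [CompleteSpace H]
    (V : Submodule ℂ H) (A B : V →ₗ[ℂ] H)
    (hAB : ∀ f g : V, (inner ℂ (A f) (g : H) : ℂ) = inner ℂ (f : H) (B g))
    (HA HB : H →L[ℂ] H)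
    (hHAran : ∀ v : H, HA v ∈ closure (Set.range fun w : V => B w))
    (hHBran : ∀ v : H, HB v ∈ closure (Set.range fun w : V => A w))
    (hHA : ∀ v : H, ∀ w : V, (inner ℂ (HA v) (B w) : ℂ) = inner ℂ v (w : H))
    (hHB : ∀ v : H, ∀ w : V, (inner ℂ (HB v) (A w) : ℂ) = inner ℂ v (w : H))
    (πA : H →L[ℂ] H)
    (hπA : πA = (LinearMap.range B)ᗮ.subtypeL ∘L Submodule.orthogonalProjectionOnto (LinearMap.range B)ᗮ)
    (GA : H →L[ℂ] H)
    (hGA : GA = HA + πA ∘L ContinuousLinearMap.adjoint HB) :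
    (∀ v : H, ∀ w : V, (inner ℂ (GA v) (B w) : ℂ) = inner ℂ v (w : H)) ∧
      ‖GA‖ ≤ ‖HA‖ + ‖HB‖ := by
  have hπA_mem : ∀ x : H, πA x ∈ (LinearMap.range B)ᗮ := by
    intro x; rw [hπA]; exact (Submodule.orthogonalProjectionOnto (LinearMap.range B)ᗮ x).2
  have hπA_norm : ∀ x : H, ‖πA x‖ ≤ ‖x‖ := by
    intro x; rw [hπA]
    have h := (Submodule.orthogonalProjectionOnto (LinearMap.range B)ᗮ).le_opNorm x
    have h2 := Submodule.orthogonalProjectionOnto_norm_le (LinearMap.range B)ᗮ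
    simp only [ContinuousLinearMap.comp_apply, Submodule.subtypeL_apply]
    calc ‖(Submodule.orthogonalProjectionOnto (LinearMap.range B)ᗮ x : H)‖
        = ‖Submodule.orthogonalProjectionOnto (LinearMap.range B)ᗮ x‖ := rfl
      _ ≤ ‖Submodule.orthogonalProjectionOnto (LinearMap.range B)ᗮ‖ * ‖x‖ := h
      _ ≤ 1 * ‖x‖ := by gcongr
      _ = ‖x‖ := one_mul _
  constructor
  · intro v w
    rw [hGA]
    simp only [ContinuousLinearMap.add_apply, ContinuousLinearMap.comp_apply,
      inner_add_left]
    rw [hHA v w]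
    have : (inner ℂ (πA ((ContinuousLinearMap.adjoint HB) v)) (B w) : ℂ) = 0 := by
      rw [← inner_conj_symm]
      rw [(hπA_mem _) (B w) (LinearMap.mem_range_self B w)]
      simp
    rw [this, add_zero]
  · rw [hGA]
    refine le_trans (norm_add_le _ _) (add_le_add le_rfl ?_)
    refine ContinuousLinearMap.opNorm_le_bound _ (norm_nonneg HB) fun x => ?_
    calc ‖(πA ∘L ContinuousLinearMap.adjoint HB) x‖
        ≤ ‖ContinuousLinearMap.adjoint HB x‖ := hπA_norm _
      _ ≤ ‖ContinuousLinearMap.adjoint HB‖ * ‖x‖ :=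
          ContinuousLinearMap.le_opNorm (ContinuousLinearMap.adjoint HB) x
      _ = ‖HB‖ * ‖x‖ := by
          rw [LinearIsometryEquiv.norm_map ContinuousLinearMap.adjoint HB]
end

section
/- Define G_A = H_A + π_A ∘ H_B† and G_B = H_B + π_B ∘ H_A†, where † denotes the Hilbert-space adjoint. Then G_A† = G_B. -/
set_option synthInstance.maxHeartbeats 400000
set_option maxHeartbeats 1600000

/-- Item (iv) of Theorem 2.3: the Green operators `G_A = H_A + π_A H_B*` and
`G_B = H_B + π_B H_A*` satisfy `G_A* = G_B`. -/
theorem stmt_4 {H : Type*} [NormedAddCommGroup H] [InnerProductSpace ℂ H] [CompleteSpace H]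
    (V : Submodule ℂ H) (A B : V →ₗ[ℂ] H)
    (hAB : ∀ f g : V, (inner ℂ (A f) (g : H) : ℂ) = inner ℂ (f : H) (B g))
    (HA HB : H →L[ℂ] H)
    (hHAran : ∀ v : H, HA v ∈ closure (Set.range fun w : V => B w))
    (hHBran : ∀ v : H, HB v ∈ closure (Set.range fun w : V => A w))
    (hHA : ∀ v : H, ∀ w : V, (inner ℂ (HA v) (B w) : ℂ) = inner ℂ v (w : H))
    (hHB : ∀ v : H, ∀ w : V, (inner ℂ (HB v) (A w) : ℂ) = inner ℂ v (w : H))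
    (πA πB : H →L[ℂ] H)
    (hπA : πA = (LinearMap.range B)ᗮ.subtypeL ∘L Submodule.orthogonalProjection (LinearMap.range B)ᗮ)
    (hπB : πB = (LinearMap.range A)ᗮ.subtypeL ∘L Submodule.orthogonalProjection (LinearMap.range A)ᗮ)
    (GA GB : H →L[ℂ] H)
    (hGA : GA = HA + πA ∘L ContinuousLinearMap.adjoint HB)
    (hGB : GB = HB + πB ∘L ContinuousLinearMap.adjoint HA) :
    ContinuousLinearMap.adjoint GA = GB := by
  -- closures of ranges as sets
  have hBclos : closure (Set.range fun w : V => B w) = ((LinearMap.range B).topologicalClosure : Set H) := by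
    rw [Submodule.topologicalClosure_coe, LinearMap.coe_range]
  have hAclos : closure (Set.range fun w : V => A w) = ((LinearMap.range A).topologicalClosure : Set H) := by
    rw [Submodule.topologicalClosure_coe, LinearMap.coe_range]
  -- key lemma: symmetry of HB/HA on closures of ranges
  have key : ∀ u ∈ closure (Set.range fun w : V => B w),
      ∀ v ∈ closure (Set.range fun w : V => A w),
      (inner ℂ (HB u) v : ℂ) = inner ℂ u (HA v) := by
    have h1 : ∀ f : V, ∀ v ∈ closure (Set.range fun w : V => A w),
        (inner ℂ (HB (B f)) v : ℂ) = inner ℂ (B f : H) (HA v) := by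
      intro f v hv
      have hsub : closure (Set.range fun w : V => A w) ⊆
          {v : H | (inner ℂ (HB (B f)) v : ℂ) = inner ℂ (B f : H) (HA v)} := by
        refine closure_minimal ?_ ?_
        · rintro _ ⟨g, rfl⟩
          show (inner ℂ (HB (B f)) (A g) : ℂ) = inner ℂ (B f : H) (HA (A g))
          rw [hHB (B f) g]
          have h2 : (inner ℂ (HA (A g)) (B f) : ℂ) = inner ℂ (A g) (f : H) := hHA (A g) f
          have h3 := congrArg (starRingEnd ℂ) h2
          rw [inner_conj_symm, inner_conj_symm] at h3
          rw [h3]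
          have h4 := congrArg (starRingEnd ℂ) (hAB g f)
          rw [inner_conj_symm, inner_conj_symm] at h4
          exact h4.symm
        · exact isClosed_eq (Continuous.inner continuous_const continuous_id)
            (Continuous.inner continuous_const HA.continuous)
      exact hsub hv
    intro u hu v hv
    have hsub : closure (Set.range fun w : V => B w) ⊆
        {u : H | (inner ℂ (HB u) v : ℂ) = inner ℂ u (HA v)} := by
      refine closure_minimal ?_ ?_
      · rintro _ ⟨f, rfl⟩
        exact h1 f v hv
      · exact isClosed_eq (Continuous.inner HB.continuous continuous_const)
          (Continuous.inner continuous_id continuous_const)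
    exact hsub hu
  -- reduce to inner product identity
  rw [eq_comm, ContinuousLinearMap.eq_adjoint_iff]
  intro x y
  rw [hGA, hGB]
  simp only [ContinuousLinearMap.add_apply, ContinuousLinearMap.comp_apply,
    inner_add_left, inner_add_right]
  -- self-adjointness of projections + adjoint identities
  have hπAsa : ∀ a b : H, (inner ℂ (πA a) b : ℂ) = inner ℂ a (πA b) := by
    intro a b
    rw [hπA]
    simpa using Submodule.inner_starProjection_left_eq_right (K := (LinearMap.range B)ᗮ) a b
  have hπBsa : ∀ a b : H, (inner ℂ (πB a) b : ℂ) = inner ℂ a (πB b) := by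
    intro a b
    rw [hπB]
    simpa using Submodule.inner_starProjection_left_eq_right (K := (LinearMap.range A)ᗮ) a b
  have e1 : (inner ℂ (πB (ContinuousLinearMap.adjoint HA x)) y : ℂ) = inner ℂ x (HA (πB y)) := by
    rw [hπBsa, ContinuousLinearMap.adjoint_inner_left]
  have e2 : (inner ℂ x (πA (ContinuousLinearMap.adjoint HB y)) : ℂ) = inner ℂ (HB (πA x)) y := by
    rw [← hπAsa, ContinuousLinearMap.adjoint_inner_right]
  rw [e1, e2]
  -- membership facts
  have hxmem : x - πA x ∈ ((LinearMap.range B)ᗮ)ᗮ := by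
    rw [hπA]
    exact Submodule.sub_starProjection_mem_orthogonal x
  have hymem : y - πB y ∈ ((LinearMap.range A)ᗮ)ᗮ := by
    rw [hπB]
    exact Submodule.sub_starProjection_mem_orthogonal y
  rw [Submodule.orthogonal_orthogonal_eq_closure] at hxmem hymem
  have hxc : (x - πA x) ∈ closure (Set.range fun w : V => B w) := by rw [hBclos]; exact hxmem
  have hyc : (y - πB y) ∈ closure (Set.range fun w : V => A w) := by rw [hAclos]; exact hymem
  have hπAx : πA x ∈ (LinearMap.range B)ᗮ := by
    rw [hπA]; exact ((Submodule.orthogonalProjection (LinearMap.range B)ᗮ) x).2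
  have hπBy : πB y ∈ (LinearMap.range A)ᗮ := by
    rw [hπB]; exact ((Submodule.orthogonalProjection (LinearMap.range A)ᗮ) y).2
  -- orthogonality facts
  have hz1 : ∀ a b : H, (inner ℂ (HB a) (πB b) : ℂ) = 0 := by
    intro a b
    have hπBb : πB b ∈ (LinearMap.range A)ᗮ := by
      rw [hπB]; exact ((Submodule.orthogonalProjection (LinearMap.range A)ᗮ) b).2
    have hmem : HB a ∈ ((LinearMap.range A)ᗮ)ᗮ := by
      rw [Submodule.orthogonal_orthogonal_eq_closure, ← SetLike.mem_coe, ← hAclos]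
      exact hHBran a
    have h := hmem (πB b) hπBb
    have h2 := congrArg (starRingEnd ℂ) h
    rwa [inner_conj_symm, map_zero] at h2
  have hz2 : ∀ a b : H, (inner ℂ (πA a) (HA b) : ℂ) = 0 := by
    intro a b
    have hπAa : πA a ∈ (LinearMap.range B)ᗮ := by
      rw [hπA]; exact ((Submodule.orthogonalProjection (LinearMap.range B)ᗮ) a).2
    have hmem : HA b ∈ ((LinearMap.range B)ᗮ)ᗮ := by
      rw [Submodule.orthogonal_orthogonal_eq_closure, ← SetLike.mem_coe, ← hBclos]
      exact hHAran b
    exact hmem (πA a) hπAa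
  -- combine via key lemma
  have hkey := key _ hxc _ hyc
  simp only [map_sub, inner_sub_left, inner_sub_right, hz1, hz2, sub_zero, zero_sub] at hkey
  linear_combination hkey
end

section
/- Assume in addition that V is dense in H. Define G_A = H_A + π_A ∘ H_B†, where † denotes the Hilbert-space adjoint. Then G_A(A w) = w for every w ∈ V. -/
set_option synthInstance.maxHeartbeats 400000

/-- Item (v) of Theorem 2.3: if `V` is dense in `H`, the Green operator
`G_A = H_A + π_A H_B*` satisfies `G_A (A w) = w` for every `w ∈ V`. -/
theorem stmt_5 {H : Type*} [NormedAddCommGroup H] [InnerProductSpace ℂ H] [CompleteSpace H]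
    (V : Submodule ℂ H) (hV : Dense (V : Set H)) (A B : V →ₗ[ℂ] H)
    (hAB : ∀ f g : V, (inner ℂ (A f) (g : H) : ℂ) = inner ℂ (f : H) (B g))
    (HA HB : H →L[ℂ] H)
    (hHAran : ∀ v : H, HA v ∈ closure (Set.range fun w : V => B w))
    (hHBran : ∀ v : H, HB v ∈ closure (Set.range fun w : V => A w))
    (hHA : ∀ v : H, ∀ w : V, (inner ℂ (HA v) (B w) : ℂ) = inner ℂ v (w : H))
    (hHB : ∀ v : H, ∀ w : V, (inner ℂ (HB v) (A w) : ℂ) = inner ℂ v (w : H))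
    (πA : H →L[ℂ] H)
    (hπA : πA = (LinearMap.range B)ᗮ.subtypeL ∘L (LinearMap.range B)ᗮ.orthogonalProjectionOnto)
    (GA : H →L[ℂ] H)
    (hGA : GA = HA + πA ∘L ContinuousLinearMap.adjoint HB) :
    ∀ w : V, GA (A w) = (w : H) := by
  intro w
  set K := LinearMap.range B with hK
  set x := GA (A w) - (w : H) with hx
  have hGAw : GA (A w) = HA (A w) + πA (ContinuousLinearMap.adjoint HB (A w)) := by
    rw [hGA]; rfl
  -- πA lands in Kᗮ
  have hπA_mem : ∀ y : H, πA y ∈ Kᗮ := by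
    intro y; rw [hπA]; exact ((Kᗮ.orthogonalProjectionOnto) y).2
  -- πA acts like the identity when paired with elements of Kᗮ
  have hπA_inner : ∀ y z : H, z ∈ Kᗮ → (inner ℂ (πA y) z : ℂ) = inner ℂ y z := by
    intro y z hz
    have hmem : y - πA y ∈ Kᗮᗮ := by
      rw [hπA]; exact Submodule.sub_starProjection_mem_orthogonal (K := Kᗮ) y
    have h0 : (inner ℂ (y - πA y) z : ℂ) = 0 :=
      Submodule.inner_left_of_mem_orthogonal hz hmem
    rw [inner_sub_left, sub_eq_zero] at h0
    exact h0.symm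
  -- Step 1: x ⊥ K
  have hxK : x ∈ Kᗮ := by
    rw [Submodule.mem_orthogonal]
    intro y hy
    obtain ⟨u, rfl⟩ := hy
    have h1 : (inner ℂ (HA (A w)) (B u) : ℂ) = inner ℂ ((w : H)) (B u) := by
      rw [hHA (A w) u, ← hAB w u]
    have h2 : (inner ℂ (πA (ContinuousLinearMap.adjoint HB (A w))) (B u) : ℂ) = 0 := by
      apply Submodule.inner_left_of_mem_orthogonal _ (hπA_mem _)
      exact LinearMap.mem_range_self B u
    have : (inner ℂ x (B u) : ℂ) = 0 := by
      rw [hx, inner_sub_left, hGAw, inner_add_left, h1, h2]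
      ring
    rw [← inner_conj_symm, this, map_zero]
  -- Step 2: ⟨x, z⟩ = 0 for every z ∈ Kᗮ
  have hxKperp : ∀ z : H, z ∈ Kᗮ → (inner ℂ x z : ℂ) = 0 := by
    intro z hz
    -- HA (A w) ∈ closure K, and z ⊥ closure K
    have hHAz : (inner ℂ (HA (A w)) z : ℂ) = 0 := by
      have hcl : HA (A w) ∈ K.topologicalClosure := by
        have := hHAran (A w)
        have hset : (Set.range fun w : V => B w) = (K : Set H) := by
          ext y; simp [hK, LinearMap.mem_range]
        rw [hset] at this
        exact this
      have hcl' : HA (A w) ∈ Kᗮᗮ := by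
        rw [Submodule.orthogonal_orthogonal_eq_closure]; exact hcl
      exact Submodule.inner_left_of_mem_orthogonal hz hcl'
    have hproj : (inner ℂ (πA (ContinuousLinearMap.adjoint HB (A w))) z : ℂ)
        = inner ℂ ((w : H)) z := by
      rw [hπA_inner _ _ hz, ContinuousLinearMap.adjoint_inner_left]
      rw [← inner_conj_symm, hHB z w, inner_conj_symm]
    rw [hx, inner_sub_left, hGAw, inner_add_left, hHAz, hproj]
    ring
  -- Conclude: ⟨x, x⟩ = 0
  have := hxKperp x hxK
  rw [inner_self_eq_zero] at this
  rw [hx, sub_eq_zero] at this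
  exact this
end
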